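/- Let K = GF(2^10). The power mappings x ↦ x³ and x ↦ x⁹ on K are not affine equivalent: there do not exist GF(2)-linear bijections L1, L2 : K → K and elements a, b ∈ K such that x⁹ = L2((L1(x + a))³) + b for all x ∈ K. -/

import Mathlib

open Module
abbrev K := GaloisField 2 10

noncomputable instance : DecidableEq K := Classical.decEq _
noncomputable instance : Fintype K := Fintype.ofFinite K

lemma Kcard : Fintype.card K = 1024 := by
  have := GaloisField.card 2 10 (by norm_num)
  simpa [Nat.card_eq_fintype_card] using this

lemma Kpow (x : K) : x ^ 1024 = x := by
  have h := FiniteField.pow_card x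
  rwa [Kcard] at h

lemma Kpow10 (x : K) (q : ℕ) : x ^ (2 ^ 10) ^ q = x := by
  induction q with
  | zero => simp
  | succ k ih => rw [pow_succ, pow_mul, ih]; simpa using Kpow x

lemma Kpow' (x : K) (n : ℕ) : x ^ 2 ^ (n % 10) = x ^ 2 ^ n := by
  conv_rhs => rw [← Nat.div_add_mod n 10, pow_add, pow_mul 2 10, pow_mul, Kpow10]

lemma exists_gen : ∃ g : Kˣ, orderOf g = 1023 := by
  obtain ⟨g, hg⟩ := IsCyclic.exists_generator (α := Kˣ)
  refine ⟨g, ?_⟩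
  rw [orderOf_eq_card_of_forall_mem_zpowers hg, Nat.card_units,
    Nat.card_eq_fintype_card, Kcard]

lemma indep_family {ι : Type*} [Fintype ι] {M : Type*} [CommMonoid M]
    (ψ : ι → (M →* K)) (hinj : Function.Injective ψ) (c : ι → K)
    (h : ∀ z : M, ∑ i, c i * ψ i z = 0) : ∀ i, c i = 0 := by
  have li : LinearIndependent K (fun i => ⇑(ψ i)) :=
    (linearIndependent_monoidHom M K).comp ψ hinj
  refine Fintype.linearIndependent_iff.mp li c ?_
  funext z
  simpa [Finset.sum_apply, smul_eq_mul] using h z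

-- the Frobenius powers as ZMod 2-linear maps
noncomputable def phi (k : ZMod 10) : K →ₗ[ZMod 2] K where
  toFun x := x ^ 2 ^ k.val
  map_add' x y := add_pow_char_pow x y 2 k.val
  map_smul' c x := by
    have hc := (by decide : ∀ c : ZMod 2, c = 0 ∨ c = 1) c
    rcases hc with rfl | rfl <;>
      simp [Algebra.smul_def, map_zero, map_one, zero_pow, pow_ne_zero]

lemma phi_apply (k : ZMod 10) (x : K) : phi k x = x ^ 2 ^ k.val := rfl

noncomputable def psi1 (k : ZMod 10) : K →* K := powMonoidHom (2 ^ k.val)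

lemma val_inj_aux {j k : ZMod 10} (h : (2:ℕ) ^ j.val = 2 ^ k.val) : j = k := by
  have := Nat.pow_right_injective (le_refl 2) h
  exact ZMod.val_injective 10 this

lemma psi1_inj : Function.Injective psi1 := by
  obtain ⟨g, hg⟩ := exists_gen
  intro j k h
  have h2 : ((g : K)) ^ 2 ^ j.val = ((g : K)) ^ 2 ^ k.val := by
    have := DFunLike.congr_fun h (g : K)
    simpa [psi1, powMonoidHom] using this
  have h3 : g ^ 2 ^ j.val = g ^ 2 ^ k.val := Units.ext (by push_cast [h2]; rfl)
  have h4 : 2 ^ j.val % 1023 = 2 ^ k.val % 1023 := by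
    have := (pow_eq_pow_iff_modEq.mp h3)
    rwa [hg] at this
  have hj : (2:ℕ) ^ j.val < 1023 := lt_of_le_of_lt
    (Nat.pow_le_pow_right (by norm_num) (Nat.le_of_lt_succ (ZMod.val_lt j))) (by norm_num)
  have hk : (2:ℕ) ^ k.val < 1023 := lt_of_le_of_lt
    (Nat.pow_le_pow_right (by norm_num) (Nat.le_of_lt_succ (ZMod.val_lt k))) (by norm_num)
  rw [Nat.mod_eq_of_lt hj, Nat.mod_eq_of_lt hk] at h4
  exact val_inj_aux h4

noncomputable def coeF : (K →ₗ[ZMod 2] K) →ₗ[K] (K → K) where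
  toFun f := ⇑f
  map_add' f g := rfl
  map_smul' c f := rfl

lemma phi_indep : LinearIndependent K (fun k : ZMod 10 => phi k) := by
  have h1 : LinearIndependent K (fun k : ZMod 10 => ⇑(psi1 k)) :=
    (linearIndependent_monoidHom K K).comp psi1 psi1_inj
  have h2 : (fun k : ZMod 10 => ⇑(psi1 k)) = (fun k => coeF (phi k)) := by
    funext k x
    rfl
  rw [h2] at h1
  exact LinearIndependent.of_comp coeF h1

lemma finrankV : finrank K (K →ₗ[ZMod 2] K) = 10 := by
  have b : Basis (Fin (finrank (ZMod 2) K)) (ZMod 2) K := Module.finBasis (ZMod 2) K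
  rw [(Basis.constr b K).symm.finrank_eq, Module.finrank_fin_fun,
    GaloisField.finrank 2 (by norm_num)]

lemma decomp (f : K →ₗ[ZMod 2] K) :
    ∃ m : ZMod 10 → K, ∀ x, f x = ∑ k : ZMod 10, m k * x ^ 2 ^ k.val := by
  have hcard : Fintype.card (ZMod 10) = finrank K (K →ₗ[ZMod 2] K) := by
    rw [finrankV]; rfl
  let B := basisOfLinearIndependentOfCardEqFinrank phi_indep hcard
  refine ⟨fun k => B.repr f k, fun x => ?_⟩
  have hB : ⇑B = phi := coe_basisOfLinearIndependentOfCardEqFinrank _ _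
  conv_lhs => rw [← B.sum_repr f]
  rw [LinearMap.sum_apply]
  refine Finset.sum_congr rfl fun k _ => ?_
  rw [hB, LinearMap.smul_apply, phi_apply, smul_eq_mul]

noncomputable def psi2 (ab : ZMod 10 × ZMod 10) : (K × K) →* K :=
  ((powMonoidHom (2 ^ ab.1.val)).comp (MonoidHom.fst K K)) *
  ((powMonoidHom (2 ^ ab.2.val)).comp (MonoidHom.snd K K))

lemma psi2_apply (ab : ZMod 10 × ZMod 10) (x y : K) :
    psi2 ab (x, y) = x ^ 2 ^ ab.1.val * y ^ 2 ^ ab.2.val := rfl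

lemma psi2_inj : Function.Injective psi2 := by
  obtain ⟨g, hg⟩ := exists_gen
  have key : ∀ (j k : ZMod 10), ((g:K)) ^ 2 ^ j.val = ((g:K)) ^ 2 ^ k.val → j = k := by
    intro j k h2
    have h3 : g ^ 2 ^ j.val = g ^ 2 ^ k.val := Units.ext (by push_cast [h2]; rfl)
    have h4 : 2 ^ j.val % 1023 = 2 ^ k.val % 1023 := by
      have := (pow_eq_pow_iff_modEq.mp h3); rwa [hg] at this
    have hj : (2:ℕ) ^ j.val < 1023 := lt_of_le_of_lt
      (Nat.pow_le_pow_right (by norm_num) (Nat.le_of_lt_succ (ZMod.val_lt j))) (by norm_num)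
    have hk : (2:ℕ) ^ k.val < 1023 := lt_of_le_of_lt
      (Nat.pow_le_pow_right (by norm_num) (Nat.le_of_lt_succ (ZMod.val_lt k))) (by norm_num)
    rw [Nat.mod_eq_of_lt hj, Nat.mod_eq_of_lt hk] at h4
    exact val_inj_aux h4
  intro ab cd h
  have h1 := DFunLike.congr_fun h ((g : K), 1)
  have h2 := DFunLike.congr_fun h (1, (g : K))
  rw [psi2_apply, psi2_apply] at h1 h2
  simp only [one_pow, mul_one, one_mul] at h1 h2
  exact Prod.ext (key _ _ h1) (key _ _ h2)

lemma indep2 (c : ZMod 10 × ZMod 10 → K)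
    (h : ∀ x y : K, ∑ ab : ZMod 10 × ZMod 10,
        c ab * (x ^ 2 ^ ab.1.val * y ^ 2 ^ ab.2.val) = 0) :
    ∀ ab, c ab = 0 := by
  refine indep_family psi2 psi2_inj c fun z => ?_
  exact h z.1 z.2

lemma two_zero : (2 : K) = 0 := by
  have : ((2:ℕ) : K) = 0 := CharP.cast_eq_zero K 2
  exact_mod_cast this

lemma bilinear (L1 L2 : K ≃ₗ[ZMod 2] K) (a b : K)
    (h : ∀ x : K, x ^ 9 = L2 ((L1 (x + a)) ^ 3) + b) (x y : K) :
    L2.symm (x ^ 8 * y + x * y ^ 8) = (L1 x) ^ 2 * (L1 y) + (L1 x) * (L1 y) ^ 2 := by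
  have h2 := two_zero
  have key : x ^ 8 * y + x * y ^ 8 = L2 ((L1 x) ^ 2 * (L1 y) + (L1 x) * (L1 y) ^ 2) := by
    have e1 := h (x + y)
    have e2 := h x
    have e3 := h y
    have e4 := h 0
    rw [zero_add] at e4
    rw [map_add, map_add] at e1
    rw [map_add] at e2
    rw [map_add] at e3
    set u := L1 x with hu
    set v := L1 y with hv
    set c := L1 a with hc
    have harg : (u + v + c)^3 + ((u + c)^3 + ((v + c)^3 + c^3)) = u^2*v + u*v^2 := by
      linear_combination (2*c^3 + 3*v*c^2 + 3*v^2*c + v^3 + 3*u*c^2 + 3*u*v*c + u*v^2 + 3*u^2*c + u^2*v + u^3) * h2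
    have hadd : L2 ((u + v + c)^3 + ((u + c)^3 + ((v + c)^3 + c^3))) =
        L2 ((u + v + c)^3) + (L2 ((u + c)^3) + (L2 ((v + c)^3) + L2 (c^3))) := by
      rw [map_add, map_add, map_add]
    have hcong := congrArg L2 harg
    have e4' : (0:K) ^ 9 = L2 (c ^ 3) + b := e4
    linear_combination e1 + e2 + e3 + e4' - hadd + hcong +
      (2*b - y^9 - 4*x*y^8 - 18*x^2*y^7 - 42*x^3*y^6 - 63*x^4*y^5 - 63*x^5*y^4 - 42*x^6*y^3 - 18*x^7*y^2 - 4*x^8*y - x^9) * h2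
  rw [key, LinearEquiv.symm_apply_apply]

lemma pow_val_add (x : K) (j : ZMod 10) (t : ℕ) :
    x ^ 2 ^ ((j + (t : ZMod 10)).val) = x ^ 2 ^ (j.val + t) := by
  rw [ZMod.val_add, ZMod.val_natCast]
  rw [show (j.val + t % 10) % 10 = (j.val + t) % 10 by omega, Kpow']

lemma sq_term (x : K) (j : ZMod 10) : (x ^ 2 ^ j.val) ^ 2 = x ^ 2 ^ ((j + 1).val) := by
  have : ((1:ℕ) : ZMod 10) = 1 := by norm_num
  rw [← this, pow_val_add, ← pow_mul, pow_succ]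

lemma oct_term (x : K) (l : ZMod 10) : (x ^ 8) ^ 2 ^ l.val = x ^ 2 ^ ((l + 3).val) := by
  have : ((3:ℕ) : ZMod 10) = 3 := by norm_num
  rw [← this, pow_val_add]
  rw [← pow_mul]
  congr 1
  rw [pow_add]
  ring

lemma coeff_relations (L1 L2 : K ≃ₗ[ZMod 2] K) (a b : K)
    (h : ∀ x : K, x ^ 9 = L2 ((L1 (x + a)) ^ 3) + b)
    (m p : ZMod 10 → K)
    (hm : ∀ x, L1 x = ∑ k : ZMod 10, m k * x ^ 2 ^ k.val)
    (hp : ∀ x, L2.symm x = ∑ k : ZMod 10, p k * x ^ 2 ^ k.val) :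
    ∀ k : ZMod 10, m k ^ 3 = m (k + 1) * m (k - 1) ^ 2 := by
  set c : ZMod 10 × ZMod 10 → K := fun ab =>
    m (ab.1 - 1) ^ 2 * m ab.2 + m ab.1 * m (ab.2 - 1) ^ 2 +
    ((if ab.1 = ab.2 + 3 then p ab.2 else 0) + (if ab.2 = ab.1 + 3 then p ab.1 else 0)) with hc
  have hzero : ∀ ab, c ab = 0 := by
    refine indep2 c fun x y => ?_
    -- expansions
    have hMx2 : (L1 x) ^ 2 = ∑ j : ZMod 10, m j ^ 2 * x ^ 2 ^ ((j + 1).val) := by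
      rw [hm x, sum_pow_char 2]
      refine Finset.sum_congr rfl fun j _ => ?_
      rw [mul_pow, sq_term]
    have hMy2 : (L1 y) ^ 2 = ∑ j : ZMod 10, m j ^ 2 * y ^ 2 ^ ((j + 1).val) := by
      rw [hm y, sum_pow_char 2]
      refine Finset.sum_congr rfl fun j _ => ?_
      rw [mul_pow, sq_term]
    have hI1 : ∑ ab : ZMod 10 × ZMod 10,
        m (ab.1 - 1) ^ 2 * m ab.2 * (x ^ 2 ^ ab.1.val * y ^ 2 ^ ab.2.val)
        = (L1 x) ^ 2 * L1 y := by
      rw [hMx2, hm y, Finset.sum_mul_sum, Fintype.sum_prod_type]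
      refine (Fintype.sum_equiv (Equiv.addRight (1 : ZMod 10)) _ _ fun j => ?_).symm
      refine Finset.sum_congr rfl fun k _ => ?_
      simp only [Equiv.coe_addRight]
      rw [add_sub_cancel_right]
      ring
    have hI2 : ∑ ab : ZMod 10 × ZMod 10,
        m ab.1 * m (ab.2 - 1) ^ 2 * (x ^ 2 ^ ab.1.val * y ^ 2 ^ ab.2.val)
        = L1 x * (L1 y) ^ 2 := by
      rw [hMy2, hm x, Finset.sum_mul_sum, Fintype.sum_prod_type]
      refine Finset.sum_congr rfl fun j _ => ?_
      refine (Fintype.sum_equiv (Equiv.addRight (1 : ZMod 10)) _ _ fun k => ?_).symm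
      simp only [Equiv.coe_addRight]
      rw [add_sub_cancel_right]
      ring
    have hI3 : ∑ ab : ZMod 10 × ZMod 10,
        (if ab.1 = ab.2 + 3 then p ab.2 else 0) * (x ^ 2 ^ ab.1.val * y ^ 2 ^ ab.2.val)
        = ∑ l : ZMod 10, p l * (x ^ 2 ^ ((l + 3).val) * y ^ 2 ^ l.val) := by
      rw [Fintype.sum_prod_type_right]
      refine Finset.sum_congr rfl fun b _ => ?_
      simp only [ite_mul, zero_mul]
      rw [Finset.sum_ite_eq' Finset.univ (b + 3) (fun a => p b * (x ^ 2 ^ a.val * y ^ 2 ^ b.val))]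
      simp [mul_assoc]
    have hI4 : ∑ ab : ZMod 10 × ZMod 10,
        (if ab.2 = ab.1 + 3 then p ab.1 else 0) * (x ^ 2 ^ ab.1.val * y ^ 2 ^ ab.2.val)
        = ∑ l : ZMod 10, p l * (x ^ 2 ^ l.val * y ^ 2 ^ ((l + 3).val)) := by
      rw [Fintype.sum_prod_type]
      refine Finset.sum_congr rfl fun a _ => ?_
      simp only [ite_mul, zero_mul]
      rw [Finset.sum_ite_eq' Finset.univ (a + 3) (fun b => p a * (x ^ 2 ^ a.val * y ^ 2 ^ b.val))]
      simp [mul_assoc]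
    have hPexp : L2.symm (x ^ 8 * y + x * y ^ 8)
        = ∑ l : ZMod 10, p l * (x ^ 2 ^ ((l + 3).val) * y ^ 2 ^ l.val)
          + ∑ l : ZMod 10, p l * (x ^ 2 ^ l.val * y ^ 2 ^ ((l + 3).val)) := by
      rw [hp, ← Finset.sum_add_distrib]
      refine Finset.sum_congr rfl fun l _ => ?_
      rw [add_pow_char_pow (x ^ 8 * y) (x * y ^ 8) 2 l.val, mul_pow, mul_pow, oct_term x l, oct_term y l]
      ring
    have hL := bilinear L1 L2 a b h x y
    calc ∑ ab : ZMod 10 × ZMod 10, c ab * (x ^ 2 ^ ab.1.val * y ^ 2 ^ ab.2.val)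
        = ∑ ab : ZMod 10 × ZMod 10,
            (m (ab.1 - 1) ^ 2 * m ab.2 * (x ^ 2 ^ ab.1.val * y ^ 2 ^ ab.2.val)
            + m ab.1 * m (ab.2 - 1) ^ 2 * (x ^ 2 ^ ab.1.val * y ^ 2 ^ ab.2.val)
            + ((if ab.1 = ab.2 + 3 then p ab.2 else 0) * (x ^ 2 ^ ab.1.val * y ^ 2 ^ ab.2.val)
              + (if ab.2 = ab.1 + 3 then p ab.1 else 0) * (x ^ 2 ^ ab.1.val * y ^ 2 ^ ab.2.val))) := by
          refine Finset.sum_congr rfl fun ab _ => ?_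
          rw [hc]
          ring
      _ = (L1 x) ^ 2 * L1 y + L1 x * (L1 y) ^ 2
          + (∑ l : ZMod 10, p l * (x ^ 2 ^ ((l + 3).val) * y ^ 2 ^ l.val)
            + ∑ l : ZMod 10, p l * (x ^ 2 ^ l.val * y ^ 2 ^ ((l + 3).val))) := by
          rw [← hI1, ← hI2, ← hI3, ← hI4]
          rw [Finset.sum_add_distrib, Finset.sum_add_distrib, Finset.sum_add_distrib]
      _ = 0 := by
          rw [← hPexp, ← hL, CharTwo.add_self_eq_zero]
  intro k
  have h1 := hzero (k + 1, k)
  rw [hc] at h1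
  simp only [add_sub_cancel_right] at h1
  have hne1 : ¬ (k + 1 = k + 3) := by
    intro hh
    have : (1 : ZMod 10) = 3 := by exact add_left_cancel hh
    exact absurd this (by decide)
  have hne2 : ¬ (k = (k + 1) + 3) := by
    intro hh
    have : (0 : ZMod 10) = 4 := by linear_combination hh
    exact absurd this (by decide)
  rw [if_neg hne1, if_neg hne2] at h1
  have h2 := two_zero
  linear_combination h1 - (m (k+1) * m (k-1) ^ 2) * h2

noncomputable def SS (z : K) : K := ∑ n ∈ Finset.range 10, z ^ 2 ^ n

lemma SS_sq (z : K) : SS z ^ 2 = SS z := by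
  unfold SS
  rw [sum_pow_char 2]
  have h1 : ∑ n ∈ Finset.range 10, (z ^ 2 ^ n) ^ 2 = ∑ n ∈ Finset.range 10, z ^ 2 ^ (n + 1) := by
    refine Finset.sum_congr rfl fun n _ => ?_
    rw [← pow_mul, pow_succ]
  rw [h1, Finset.sum_range_succ, Finset.sum_range_succ' (fun n => z ^ 2 ^ n) 9]
  norm_num [Kpow z]

lemma SS_zero_or_one (z : K) : SS z = 0 ∨ SS z = 1 := by
  have h := SS_sq z
  have : SS z * (SS z - 1) = 0 := by linear_combination h
  rcases mul_eq_zero.mp this with h' | h'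
  · exact Or.inl h'
  · exact Or.inr (by linear_combination h')

lemma sum_zmod_to_range (f : ZMod 10 → K) (g : ℕ → K)
    (hfg : ∀ n : ℕ, n < 10 → f ((n : ℕ) : ZMod 10) = g n) :
    ∑ k : ZMod 10, f k = ∑ n ∈ Finset.range 10, g n := by
  refine Finset.sum_nbij' (fun k => k.val) (fun n => (n : ZMod 10)) ?_ ?_ ?_ ?_ ?_
  · intro k _; exact Finset.mem_range.mpr (ZMod.val_lt k)
  · intro n _; exact Finset.mem_univ _
  · intro k _
    exact (ZMod.natCast_rightInverse k : _)
  · intro n hn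
    exact ZMod.val_cast_of_lt (Finset.mem_range.mp hn)
  · intro k _
    have h1 := hfg k.val (ZMod.val_lt k)
    have h2 : ((k.val : ℕ) : ZMod 10) = k := ZMod.natCast_rightInverse k
    rw [← h1, h2]

theorem stmt_15 :
    ¬ ∃ (L1 L2 : GaloisField 2 10 ≃ₗ[ZMod 2] GaloisField 2 10)
        (a b : GaloisField 2 10),
      ∀ x : GaloisField 2 10, x ^ 9 = L2 ((L1 (x + a)) ^ 3) + b := by
  rintro ⟨L1, L2, a, b, h⟩
  obtain ⟨m, hm⟩ := decomp (L1 : K →ₗ[ZMod 2] K)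
  obtain ⟨p, hp⟩ := decomp (L2.symm : K →ₗ[ZMod 2] K)
  have hm' : ∀ x, L1 x = ∑ k : ZMod 10, m k * x ^ 2 ^ k.val := fun x => hm x
  have hp' : ∀ x, L2.symm x = ∑ k : ZMod 10, p k * x ^ 2 ^ k.val := fun x => hp x
  have hrel := coeff_relations L1 L2 a b h m p hm' hp'
  -- some coefficient is nonzero
  have hex : ∃ k, m k ≠ 0 := by
    by_contra hall
    push_neg at hall
    have h10 : L1 1 = 0 := by
      rw [hm' 1]
      refine Finset.sum_eq_zero fun k _ => by rw [hall k, zero_mul]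
    have : (1 : K) = 0 := L1.injective (by rw [h10, map_zero])
    exact one_ne_zero this
  obtain ⟨k0, hk0⟩ := hex
  -- all coefficients are nonzero
  have step : ∀ k, m k ≠ 0 → m (k + 1) ≠ 0 := by
    intro k hk hc1
    have := hrel k
    rw [hc1, zero_mul] at this
    exact hk (pow_eq_zero_iff (by norm_num) |>.mp this)
  have hall : ∀ k, m k ≠ 0 := by
    have hn : ∀ n : ℕ, m (k0 + n) ≠ 0 := by
      intro n
      induction n with
      | zero => simpa using hk0
      | succ t ih =>
          have := step _ ih
          have he : k0 + ((t:ℕ) + 1 : ℕ) = (k0 + t) + 1 := by push_cast; ring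
          rwa [he]
    intro k
    have he : k = k0 + ((k - k0).val : ℕ) := by
      rw [(ZMod.natCast_rightInverse (k - k0) : _)]; ring
    rw [he]; exact hn _
  -- the common ratio
  set r : K := m 1 / m 0 ^ 2 with hr
  have hrne : r ≠ 0 := div_ne_zero (hall 1) (pow_ne_zero 2 (hall 0))
  have hqstep : ∀ k : ZMod 10, m (k + 1) = r * m k ^ 2 := by
    have key : ∀ n : ℕ, m ((n : ZMod 10) + 1) = r * m (n : ZMod 10) ^ 2 := by
      intro n
      induction n with
      | zero =>
          push_cast
          rw [hr, div_mul_eq_mul_div, mul_div_assoc, div_self (pow_ne_zero 2 (hall 0)), mul_one,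
            zero_add]
      | succ t ih =>
          push_cast
          push_cast at ih
          have h1 := hrel ((t : ZMod 10) + 1)
          rw [add_sub_cancel_right] at h1
          have h2 : m ((t : ZMod 10) + 1 + 1) * m (t : ZMod 10) ^ 2
              = (r * m ((t : ZMod 10) + 1) ^ 2) * m (t : ZMod 10) ^ 2 := by
            linear_combination (-1 : K) * h1 + m ((t : ZMod 10) + 1) ^ 2 * ih
          exact mul_right_cancel₀ (pow_ne_zero 2 (hall _)) h2
    intro k
    have he : k = ((k.val : ℕ) : ZMod 10) := ((ZMod.natCast_rightInverse k : _) : _).symm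
    rw [he]
    exact key k.val
  -- explicit formula for the coefficients
  have hform : ∀ n : ℕ, m ((n : ℕ) : ZMod 10) = r ^ (2 ^ n - 1) * m 0 ^ 2 ^ n := by
    intro n
    induction n with
    | zero => simp
    | succ t ih =>
        have he : (((t + 1 : ℕ)) : ZMod 10) = ((t : ℕ) : ZMod 10) + 1 := by push_cast; ring
        rw [he, hqstep, ih]
        rw [mul_pow, ← pow_mul, ← pow_mul]
        have h1 : 1 ≤ (2:ℕ) ^ t := Nat.one_le_two_pow
        have ha : 2 ^ (t + 1) - 1 = (2 ^ t - 1) * 2 + 1 := by rw [pow_succ]; omega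
        rw [ha, pow_succ 2 t, pow_succ r]
        ring
  -- L1 has tiny image
  have himg : ∀ x : K, L1 x = r⁻¹ * SS (r * m 0 * x) := by
    intro x
    rw [hm' x]
    have hstep : ∀ n : ℕ, n < 10 → m ((n : ℕ) : ZMod 10) * x ^ 2 ^ (((n : ℕ) : ZMod 10).val)
        = r⁻¹ * (r * m 0 * x) ^ 2 ^ n := by
      intro n hn
      rw [ZMod.val_cast_of_lt hn]
      rw [hform n, mul_pow, mul_pow]
      have h1 : 1 ≤ 2 ^ n := Nat.one_le_two_pow
      have h2 : r ^ (2 ^ n) = r ^ (2 ^ n - 1) * r := by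
        rw [← pow_succ]
        congr 1
        omega
      field_simp [h2]
      rw [h2]; ring
    rw [sum_zmod_to_range (fun k => m k * x ^ 2 ^ k.val)
      (fun n => r⁻¹ * (r * m 0 * x) ^ 2 ^ n) (fun n hn => by beta_reduce; exact hstep n hn)]
    rw [SS, Finset.mul_sum]
  -- three distinct elements mapping into a two-element set
  have hex3 : ∃ u : K, u ≠ 0 ∧ u ≠ 1 := by
    by_contra hc
    push_neg at hc
    have hsub : (Finset.univ : Finset K) ⊆ ({0, 1} : Finset K) := by
      intro u _
      rcases eq_or_ne u 0 with h0 | h0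
      · simp [h0]
      · simp [hc u h0]
    have hle := Finset.card_le_card hsub
    rw [Finset.card_univ, Kcard] at hle
    have : ({0, 1} : Finset K).card ≤ 2 := Finset.card_insert_le _ _ |>.trans (by simp)
    omega
  obtain ⟨u, hu0, hu1⟩ := hex3
  have hval : ∀ x : K, L1 x = 0 ∨ L1 x = r⁻¹ := by
    intro x
    rcases SS_zero_or_one (r * m 0 * x) with h' | h'
    · left; rw [himg x, h']; ring
    · right; rw [himg x, h']; ring
  have hL1u : L1 u ≠ 0 := fun hh => hu0 (L1.injective (by rw [hh, map_zero]))
  have hL11 : L1 1 ≠ 0 := fun hh => one_ne_zero (L1.injective (by rw [hh, map_zero]))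
  have e1 : L1 u = r⁻¹ := (hval u).resolve_left hL1u
  have e2 : L1 1 = r⁻¹ := (hval 1).resolve_left hL11
  exact hu1 (L1.injective (by rw [e1, e2]))
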